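/- Let c ≥ 1 be an integer, k an odd positive integer, ζ a primitive 2c-th root of unity, and let d, z ≥ 0 be integers and a ∈ ℤ[ζ]. If n ≥ (2d+1)·kc, then Φ_{kc}(q)^{d+1} divides ∑_{m=0}^{n} ζ^m a q^{zm} binom(n,m)_q in ℤ[ζ][q]. -/

import Mathlib

open Polynomial Finset

/-- The Gaussian (q-)binomial coefficient as a polynomial, satisfying the
product formula `∏_{i=n-m+1}^{n}(1-q^i) / ∏_{i=1}^{m}(1-q^i)`. -/
noncomputable def qbinom (R : Type*) [CommRing R] : ℕ → ℕ → Polynomial R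
  | _, 0 => 1
  | 0, _+1 => 0
  | n+1, m+1 => qbinom R n (m+1) + X ^ (n - m) * qbinom R n m

/-- The subring ℤ[ζ] of ℂ. -/
noncomputable abbrev Zadj (ζ : ℂ) : Type := Algebra.adjoin ℤ ({ζ} : Set ℂ)

/-- ζ as an element of ℤ[ζ]. -/
noncomputable def zeta (ζ : ℂ) : Zadj ζ := ⟨ζ, Algebra.self_mem_adjoin_singleton ℤ ζ⟩

variable {R : Type*} [CommRing R]

@[simp] lemma qbinom_zero_right (n : ℕ) : qbinom R n 0 = 1 := by
  cases n <;> rfl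

@[simp] lemma qbinom_zero_succ (m : ℕ) : qbinom R 0 (m+1) = 0 := rfl

lemma qbinom_succ_succ (n m : ℕ) :
    qbinom R (n+1) (m+1) = qbinom R n (m+1) + X ^ (n - m) * qbinom R n m := rfl

lemma qbinom_eq_zero : ∀ {n m : ℕ}, n < m → qbinom R n m = 0 := by
  intro n
  induction n with
  | zero => intro m h; cases m with
    | zero => omega
    | succ m => rfl
  | succ n ih =>
    intro m h
    cases m with
    | zero => omega
    | succ m =>
      rw [qbinom_succ_succ, ih (by omega), ih (by omega), mul_zero, add_zero]

@[simp] lemma qbinom_self : ∀ (n : ℕ), qbinom R n n = 1 := by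
  intro n
  induction n with
  | zero => rfl
  | succ n ih =>
    rw [qbinom_succ_succ, qbinom_eq_zero (by omega), ih, Nat.sub_self, pow_zero,
      one_mul, zero_add]

lemma qbinom_one (n : ℕ) : qbinom R n 1 = ∑ i ∈ range n, X ^ i := by
  induction n with
  | zero => simp
  | succ n ih => rw [qbinom_succ_succ, ih, geom_sum_succ']; simp [add_comm]

/-- second Pascal rule -/
lemma qbinom_succ_succ' : ∀ (n m : ℕ),
    qbinom R (n+1) (m+1) = X ^ (m+1) * qbinom R n (m+1) + qbinom R n m := by
  intro n
  induction n with
  | zero =>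
    intro m
    cases m with
    | zero => simp [qbinom_succ_succ]
    | succ m => simp [qbinom_succ_succ, qbinom_eq_zero]
  | succ n ih =>
    intro m
    cases m with
    | zero =>
      rw [qbinom_succ_succ, qbinom_one]
      simp only [qbinom_zero_right, mul_one, Nat.sub_zero, zero_add, pow_one]
      rw [add_comm, ← geom_sum_succ', geom_sum_succ]
    | succ m =>
      have L : qbinom R (n+1+1) (m+1+1)
          = qbinom R (n+1) (m+1+1) + X ^ (n+1-(m+1)) * qbinom R (n+1) (m+1) :=
        qbinom_succ_succ _ _
      rcases lt_trichotomy m n with h | rfl | h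
      · obtain ⟨t, rfl⟩ := Nat.exists_eq_add_of_le h.le
        obtain ⟨s, rfl⟩ := Nat.exists_eq_add_of_le (show 1 ≤ t by omega)
        conv_lhs => rw [L, ih (m+1), ih m]
        conv_rhs => rw [qbinom_succ_succ (m+(1+s)) (m+1), qbinom_succ_succ (m+(1+s)) m]
        have e1 : m + (1 + s) + 1 - (m + 1) = s + 1 := by omega
        have e2 : m + (1 + s) - (m + 1) = s := by omega
        have e3 : m + (1 + s) - m = s + 1 := by omega
        rw [e1, e2, e3]
        ring
      · rw [L, ih (m+1), ih m,
          qbinom_eq_zero (show m < m+1+1 by omega), qbinom_eq_zero (show m < m+1 by omega)]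
        simp [Nat.sub_self]
      · rw [L, ih (m+1), ih m, qbinom_eq_zero (show n < m+1 by omega),
          qbinom_eq_zero (show n < m+1+1 by omega), qbinom_eq_zero (show n < m by omega)]
        simp

lemma map_qbinom {S : Type*} [CommRing S] (f : R →+* S) : ∀ (n m : ℕ),
    (qbinom R n m).map f = qbinom S n m := by
  intro n
  induction n with
  | zero => intro m; cases m with
    | zero => simp [qbinom_zero_right]
    | succ m => simp [qbinom]
  | succ n ih =>
    intro m
    cases m with
    | zero => simp [qbinom_zero_right]
    | succ m => rw [qbinom_succ_succ, qbinom_succ_succ, Polynomial.map_add,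
        Polynomial.map_mul, Polynomial.map_pow, map_X, ih, ih]

/-- product formula -/
lemma qbinom_prod_formula : ∀ (n m : ℕ),
    (∏ i ∈ range m, (1 - X ^ (i+1))) * qbinom R n m = ∏ i ∈ range m, (1 - X ^ (n-i)) := by
  intro n
  induction n with
  | zero =>
    intro m
    cases m with
    | zero => simp [qbinom_zero_right]
    | succ m =>
      rw [qbinom_eq_zero (by omega), mul_zero]
      rw [Finset.prod_range_succ']
      simp
  | succ n ih =>
    intro m
    cases m with
    | zero => simp [qbinom_zero_right]
    | succ m =>
      have hD : (∏ i ∈ range (m+1), (1 - (X:Polynomial R) ^ (i+1)))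
          = (∏ i ∈ range m, (1 - X ^ (i+1))) * (1 - X ^ (m+1)) := Finset.prod_range_succ _ _
      rcases le_or_gt (m+1) n with h | h
      · rw [qbinom_succ_succ, mul_add, ih (m+1)]
        have key : (∏ i ∈ range (m+1), (1 - (X:Polynomial R) ^ (i+1))) * (X ^ (n-m) * qbinom R n m)
            = (1 - X ^ (m+1)) * X ^ (n-m) * ∏ i ∈ range m, (1 - X ^ (n-i)) := by
          rw [hD, ← ih m]; ring
        rw [key, Finset.prod_range_succ, Finset.prod_range_succ']
        have hP : (∏ i ∈ range m, (1 - (X:Polynomial R) ^ (n+1-(i+1))))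
            = ∏ i ∈ range m, (1 - X ^ (n-i)) :=
          Finset.prod_congr rfl fun i _ => by congr 2; omega
        rw [hP]
        have hx : (X:Polynomial R) ^ (n-m) * X ^ (m+1) = X ^ (n+1) := by
          rw [← pow_add]; congr 1; omega
        have hnm : n + 1 - 0 = n + 1 := rfl
        rw [hnm]
        linear_combination (-(∏ i ∈ range m, (1 - (X:Polynomial R) ^ (n-i)))) * hx
      · rcases (show n = m ∨ n < m by omega) with rfl | h'
        · rw [qbinom_succ_succ, qbinom_eq_zero (by omega), qbinom_self, zero_add,
            Nat.sub_self, pow_zero, one_mul, mul_one, ← Finset.prod_range_reflect]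
          exact Finset.prod_congr rfl fun i hi => by
            have := Finset.mem_range.mp hi; congr 2; omega
        · rw [qbinom_eq_zero (by omega), mul_zero]
          symm
          apply Finset.prod_eq_zero (Finset.mem_range.mpr (show n+1 < m+1 by omega))
          rw [Nat.sub_self]
          simp

lemma not_cyclotomic_dvd_one_sub_X_pow {N j : ℕ} (hj : 0 < j) (hjN : j < N) :
    ¬ (cyclotomic N ℤ ∣ 1 - X ^ j) := by
  intro hdvd
  have hN : 0 < N := lt_trans hj hjN
  obtain ⟨ω, hω⟩ : ∃ ω : ℂ, IsPrimitiveRoot ω N := ⟨_, Complex.isPrimitiveRoot_exp N hN.ne'⟩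
  obtain ⟨g, hg⟩ := hdvd
  have := congrArg (fun p => Polynomial.aeval ω p) hg
  simp only [map_sub, map_one, map_pow, map_mul, Polynomial.aeval_X] at this
  have hroot : (Polynomial.aeval ω) (cyclotomic N ℤ) = 0 := by
    have h1 : (Polynomial.aeval ω) (cyclotomic N ℤ) = Polynomial.eval ω (cyclotomic N ℂ) := by
      rw [Polynomial.aeval_def, Polynomial.eval₂_eq_eval_map, map_cyclotomic]
    rw [h1]
    exact hω.isRoot_cyclotomic hN
  rw [hroot, zero_mul] at this
  have : ω ^ j = 1 := by linear_combination -this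
  exact hω.pow_ne_one_of_pos_of_lt hj.ne' hjN this

lemma cyclotomic_dvd_qbinom_int {N m : ℕ} (hm : 0 < m) (hmN : m < N) :
    cyclotomic N ℤ ∣ qbinom ℤ N m := by
  have hN : 0 < N := lt_trans hm hmN
  have hprime : Prime (cyclotomic N ℤ) :=
    UniqueFactorizationMonoid.irreducible_iff_prime.mp (cyclotomic.irreducible hN)
  have hdvd : cyclotomic N ℤ ∣ (∏ i ∈ range m, ((1:Polynomial ℤ) - X ^ (N-i))) := by
    refine dvd_trans ?_ (Finset.dvd_prod_of_mem _ (Finset.mem_range.mpr hm))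
    rw [Nat.sub_zero]
    have := cyclotomic.dvd_X_pow_sub_one N ℤ
    obtain ⟨g, hg⟩ := this
    exact ⟨-g, by linear_combination -hg⟩
  rw [← qbinom_prod_formula] at hdvd
  rcases hprime.dvd_mul.mp hdvd with h | h
  · exfalso
    obtain ⟨i, hi, hdvd'⟩ := hprime.exists_mem_finset_dvd h
    exact not_cyclotomic_dvd_one_sub_X_pow (Nat.succ_pos i)
      (by have := Finset.mem_range.mp hi; omega) hdvd'
  · exact h

lemma cyclotomic_dvd_qbinom {N m : ℕ} (hm : 0 < m) (hmN : m < N) :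
    cyclotomic N R ∣ qbinom R N m := by
  obtain ⟨g, hg⟩ := cyclotomic_dvd_qbinom_int hm hmN
  refine ⟨g.map (Int.castRingHom R), ?_⟩
  have := congrArg (fun p => p.map (Int.castRingHom R)) hg
  simpa only [Polynomial.map_mul, map_cyclotomic, map_qbinom] using this

noncomputable def Ssum (u : R) (f : ℕ → Polynomial R) (n w : ℕ) : Polynomial R :=
  ∑ m ∈ range (n+1), C (u^m) * X^(w*m) * f m * qbinom R n m

lemma Ssum_step (u : R) (f : ℕ → Polynomial R) (n w : ℕ) :
    Ssum u f (n+1) w = Ssum u f n (w+1) + C u * X^w * Ssum u (fun m => f (m+1)) n w := by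
  have hsplit : Ssum u f (n+1) w
      = ∑ i ∈ range (n+1), C (u^(i+1)) * X^(w*(i+1)) * f (i+1) * qbinom R (n+1) (i+1)
        + C (u^0) * X^(w*0) * f 0 * qbinom R (n+1) 0 :=
    Finset.sum_range_succ' _ _
  have hterm : ∀ i ∈ range (n+1), C (u^(i+1)) * X^(w*(i+1)) * f (i+1) * qbinom R (n+1) (i+1)
      = (C (u^(i+1)) * X^((w+1)*(i+1)) * f (i+1) * qbinom R n (i+1))
        + C u * X^w * (C (u^i) * X^(w*i) * f (i+1) * qbinom R n i) := by
    intro i _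
    rw [qbinom_succ_succ', pow_succ, map_mul]
    ring
  rw [hsplit, Finset.sum_congr rfl hterm, Finset.sum_add_distrib]
  have hA : ∑ i ∈ range (n+1), C (u^(i+1)) * X^((w+1)*(i+1)) * f (i+1) * qbinom R n (i+1)
      + C (u^0) * X^((w+1)*0) * f 0 * qbinom R n 0 = Ssum u f n (w+1) := by
    rw [← Finset.sum_range_succ' (fun m => C (u^m) * X^((w+1)*m) * f m * qbinom R n m) (n+1),
      Finset.sum_range_succ, qbinom_eq_zero (show n < n+1 by omega), mul_zero, add_zero]
    rfl
  have hB : ∑ i ∈ range (n+1), C u * X^w * (C (u^i) * X^(w*i) * f (i+1) * qbinom R n i)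
      = C u * X^w * Ssum u (fun m => f (m+1)) n w := by
    rw [← Finset.mul_sum]; rfl
  rw [hB, ← hA]
  simp [qbinom_zero_right]
  ring

lemma Ssum_vandermonde (u : R) (f : ℕ → Polynomial R) (n w : ℕ) : ∀ N,
    Ssum u f (n+N) w = ∑ m ∈ range (N+1), C (u^m) * X^(w*m) * qbinom R N m *
      Ssum u (fun m' => f (m'+m)) n (w+N-m) := by
  intro N
  induction N generalizing f w with
  | zero => simp [qbinom_zero_right]
  | succ N ih =>
    have h1 : Ssum u f (n+(N+1)) w = Ssum u f (n+N) (w+1)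
        + C u * X^w * Ssum u (fun m => f (m+1)) (n+N) w := Ssum_step u f (n+N) w
    rw [h1, ih, ih]
    -- RHS target: peel m = 0
    rw [Finset.sum_range_succ'
      (fun m => C (u^m) * X^(w*m) * qbinom R (N+1) m * Ssum u (fun m' => f (m'+m)) n (w+(N+1)-m))
      (N+1)]
    have hterm : ∀ i ∈ range (N+1),
        C (u^(i+1)) * X^(w*(i+1)) * qbinom R (N+1) (i+1) * Ssum u (fun m' => f (m'+(i+1))) n (w+(N+1)-(i+1))
        = C (u^(i+1)) * X^((w+1)*(i+1)) * qbinom R N (i+1) * Ssum u (fun m' => f (m'+(i+1))) n ((w+1)+N-(i+1))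
          + C u * X^w * (C (u^i) * X^(w*i) * qbinom R N i * Ssum u (fun m' => f ((m'+i)+1)) n (w+N-i)) := by
      intro i hi
      have hi' : i ≤ N := by have := Finset.mem_range.mp hi; omega
      have e1 : w+(N+1)-(i+1) = (w+1)+N-(i+1) := by omega
      have e2 : w+(N+1)-(i+1) = w+N-i := by omega
      have e3 : ∀ m' : ℕ, m'+(i+1) = (m'+i)+1 := fun m' => rfl
      rw [qbinom_succ_succ', e1, pow_succ, map_mul]
      have : Ssum u (fun m' => f (m'+(i+1))) n ((w+1)+N-(i+1))
          = Ssum u (fun m' => f ((m'+i)+1)) n (w+N-i) := by rw [← e1, e2]; rfl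
      rw [← this]
      ring
    rw [Finset.sum_congr rfl hterm, Finset.sum_add_distrib]
    have hA : ∑ i ∈ range (N+1),
        C (u^(i+1)) * X^((w+1)*(i+1)) * qbinom R N (i+1) * Ssum u (fun m' => f (m'+(i+1))) n ((w+1)+N-(i+1))
        + C (u^0) * X^((w+1)*0) * qbinom R N 0 * Ssum u (fun m' => f (m'+0)) n ((w+1)+N-0)
        = ∑ m ∈ range (N+1), C (u^m) * X^((w+1)*m) * qbinom R N m * Ssum u (fun m' => f (m'+m)) n ((w+1)+N-m) := by
      rw [← Finset.sum_range_succ'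
        (fun m => C (u^m) * X^((w+1)*m) * qbinom R N m * Ssum u (fun m' => f (m'+m)) n ((w+1)+N-m)) (N+1),
        Finset.sum_range_succ, qbinom_eq_zero (show N < N+1 by omega), mul_zero, zero_mul, add_zero]
    have hB : ∑ i ∈ range (N+1), C u * X^w *
          (C (u^i) * X^(w*i) * qbinom R N i * Ssum u (fun m' => f (m'+i+1)) n (w+N-i))
        = C u * X^w * ∑ m ∈ range (N+1),
            C (u^m) * X^(w*m) * qbinom R N m * Ssum u (fun m' => f (m'+m+1)) n (w+N-m) := by
      rw [← Finset.mul_sum]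
    rw [hB, ← hA]
    have hz : C (u^0) * X^((w+1)*0) * qbinom R N 0 * Ssum u (fun m' => f (m'+0)) n ((w+1)+N-0)
        = C (u^0) * X^(w*0) * qbinom R (N+1) 0 * Ssum u (fun m' => f (m'+0)) n (w+(N+1)-0) := by
      rw [qbinom_zero_right, qbinom_zero_right]
      have : (w+1)+N-0 = w+(N+1)-0 := by omega
      rw [this]
      simp
    rw [hz]
    ring

/- ### sigma and T -/

noncomputable def sig (R : Type*) [CommRing R] (N m : ℕ) : Polynomial R :=
  ∑ i ∈ range m, ((X:Polynomial R)^N)^i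

noncomputable def Tj (u : R) (N j n w : ℕ) : Polynomial R :=
  Ssum u (fun m => (sig R N m)^j) n w

lemma sig_zero (N : ℕ) : sig R N 0 = 0 := rfl

lemma sig_succ (N m : ℕ) : sig R N (m+1) = X^N * sig R N m + 1 := geom_sum_succ

lemma sig_succ' (N m : ℕ) : sig R N (m+1) = (X^N)^m + sig R N m := geom_sum_succ'

lemma sig_add (N m : ℕ) : ∀ m', sig R N (m'+m) = sig R N m + (X^N)^m * sig R N m' := by
  intro m'
  induction m' with
  | zero => simp [sig_zero, sig]
  | succ m' ih =>
    have : m'+1+m = (m'+m)+1 := by omega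
    rw [this, sig_succ', ih, sig_succ', pow_add]
    ring

lemma geom_sig (N m : ℕ) : ((X:Polynomial R)^N)^m = 1 + sig R N m * (X^N - 1) := by
  have := geom_sum_mul ((X:Polynomial R)^N) m
  unfold sig
  linear_combination -this

/-- linearity helpers -/
lemma Ssum_sum {ι : Type*} (u : R) (s : Finset ι) (F : ι → ℕ → Polynomial R) (n w : ℕ) :
    Ssum u (fun m => ∑ i ∈ s, F i m) n w = ∑ i ∈ s, Ssum u (F i) n w := by
  unfold Ssum
  rw [Finset.sum_comm]
  refine Finset.sum_congr rfl fun m _ => ?_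
  beta_reduce
  rw [Finset.mul_sum, Finset.sum_mul]

lemma Ssum_const_mul (u : R) (p : Polynomial R) (f : ℕ → Polynomial R) (n w : ℕ) :
    Ssum u (fun m => p * f m) n w = p * Ssum u f n w := by
  unfold Ssum
  rw [Finset.mul_sum]
  refine Finset.sum_congr rfl fun m _ => by ring

lemma expansion1 (u : R) (N j n w : ℕ) :
    Ssum u (fun m => (sig R N (m+1))^j) n w
      = ∑ i ∈ range (j+1), (j.choose i : Polynomial R) * X^(N*i) * Tj u N i n w := by
  have h1 : ∀ m : ℕ, (sig R N (m+1))^j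
      = ∑ i ∈ range (j+1), ((j.choose i : Polynomial R) * X^(N*i)) * (sig R N m)^i := by
    intro m
    rw [sig_succ, add_pow]
    refine Finset.sum_congr rfl fun i _ => ?_
    rw [mul_pow, one_pow, ← pow_mul]
    ring
  calc Ssum u (fun m => (sig R N (m+1))^j) n w
      = Ssum u (fun m => ∑ i ∈ range (j+1),
          ((j.choose i : Polynomial R) * X^(N*i)) * (sig R N m)^i) n w := by
        unfold Ssum; exact Finset.sum_congr rfl fun m _ => by beta_reduce; rw [h1]
    _ = ∑ i ∈ range (j+1), Ssum u (fun m => ((j.choose i : Polynomial R) * X^(N*i)) * (sig R N m)^i) n w :=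
        Ssum_sum u _ _ n w
    _ = _ := Finset.sum_congr rfl fun i _ => by
        rw [Ssum_const_mul]; rfl

lemma expansion2 (u : R) (N j n w' M : ℕ) :
    Ssum u (fun m' => (sig R N (m'+M))^j) n w'
      = ∑ i ∈ range (j+1),
          ((sig R N M)^(j-i) * X^(N*M*i) * (j.choose i : Polynomial R)) * Tj u N i n w' := by
  have h1 : ∀ m' : ℕ, (sig R N (m'+M))^j
      = ∑ i ∈ range (j+1),
          ((sig R N M)^(j-i) * X^(N*M*i) * (j.choose i : Polynomial R)) * (sig R N m')^i := by
    intro m'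
    rw [sig_add, add_comm (sig R N M) ((X^N)^M * sig R N m'), add_pow]
    refine Finset.sum_congr rfl fun i _ => ?_
    rw [mul_pow, ← pow_mul, ← pow_mul]
    ring
  calc Ssum u (fun m' => (sig R N (m'+M))^j) n w'
      = Ssum u (fun m' => ∑ i ∈ range (j+1),
          ((sig R N M)^(j-i) * X^(N*M*i) * (j.choose i : Polynomial R)) * (sig R N m')^i) n w' := by
        unfold Ssum; exact Finset.sum_congr rfl fun m _ => by beta_reduce; rw [h1]
    _ = _ := by
        rw [Ssum_sum]
        exact Finset.sum_congr rfl fun i _ => by rw [Ssum_const_mul]; rfl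

lemma Tj_step (u : R) (N j n w : ℕ) :
    Tj u N j (n+1) w = Tj u N j n (w+1)
      + C u * X^w * ∑ i ∈ range (j+1), (j.choose i : Polynomial R) * X^(N*i) * Tj u N i n w := by
  show Ssum u (fun m => (sig R N m)^j) (n+1) w = _
  rw [Ssum_step, expansion1]
  rfl

lemma Tj_vander (u : R) (N j n w : ℕ) :
    Tj u N j (n+N) w = ∑ m ∈ range (N+1), C (u^m) * X^(w*m) * qbinom R N m *
      (∑ i ∈ range (j+1),
        ((sig R N m)^(j-i) * X^(N*m*i) * (j.choose i : Polynomial R)) * Tj u N i n (w+N-m)) := by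
  show Ssum u (fun m => (sig R N m)^j) (n+N) w = _
  rw [Ssum_vandermonde]
  exact Finset.sum_congr rfl fun m _ => by rw [expansion2]

lemma dvd_X_pow_mul_sub_one {Φ : Polynomial R} {N : ℕ} (hΦ1 : Φ ∣ X^N - 1) (t : ℕ) :
    Φ ∣ (X:Polynomial R)^(N*t) - 1 := by
  refine hΦ1.trans ?_
  rw [pow_mul]
  simpa using sub_dvd_pow_sub_pow ((X:Polynomial R)^N) 1 t

lemma dvd_sig_sub {Φ : Polynomial R} {N : ℕ} (hΦ1 : Φ ∣ X^N - 1) :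
    Φ ∣ sig R N N - (N : Polynomial R) := by
  have h : sig R N N - (N : Polynomial R) = ∑ l ∈ range N, (((X:Polynomial R)^N)^l - 1) := by
    rw [Finset.sum_sub_distrib]
    simp [sig]
  rw [h]
  refine Finset.dvd_sum fun l _ => hΦ1.trans ?_
  simpa using sub_dvd_pow_sub_pow ((X:Polynomial R)^N) 1 l

lemma dvd_mul3_sub {Φ A B b Cc : Polynomial R} (h1 : Φ ∣ A - 1) (h2 : Φ ∣ B - b)
    (h3 : Φ ∣ Cc - 1) : Φ ∣ A*B*Cc - b := by
  have h : A*B*Cc - b = (A-1)*B*Cc + (B-b)*Cc + b*(Cc-1) := by ring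
  rw [h]
  exact dvd_add (dvd_add ((h1.mul_right B).mul_right Cc) (h2.mul_right Cc)) (h3.mul_left b)

lemma Tj_shift (u : R) (N j n w : ℕ) :
    Tj u N j n (w+N) = Tj u N j n w + (X^N - 1) * Tj u N (j+1) n w := by
  unfold Tj Ssum
  rw [Finset.mul_sum, ← Finset.sum_add_distrib]
  refine Finset.sum_congr rfl fun m _ => ?_
  have hxm : (X:Polynomial R)^((w+N)*m) = X^(w*m) * ((X:Polynomial R)^N)^m := by
    rw [← pow_mul, ← pow_add]; congr 1; ring
  rw [hxm, geom_sig]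
  ring

lemma gain_dvd (u : R) (N : ℕ) (Φ : Polynomial R) (hN : 0 < N) (hu : u^N = -1)
    (hΦ1 : Φ ∣ X^N - 1) (hΦq : ∀ m, 0 < m → m < N → Φ ∣ qbinom R N m)
    (L n : ℕ) (hyp : ∀ i w, Φ^((L+1-i)/2) ∣ Tj u N i n w) (j w : ℕ) :
    Φ^((L+2-j)/2) ∣ Tj u N j (n+N) w := by
  set E := (L+2-j)/2 with hE
  -- inner sums
  set G : ℕ → ℕ → Polynomial R := fun m w' => ∑ i ∈ range (j+1),
    ((sig R N m)^(j-i) * X^(N*m*i) * (j.choose i : Polynomial R)) * Tj u N i n w' with hG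
  set g : ℕ → Polynomial R := fun m =>
    C (u^m) * X^(w*m) * qbinom R N m * G m (w+N-m) with hgdef
  have h0 : Tj u N j (n+N) w = ∑ m ∈ range (N+1), g m := Tj_vander u N j n w
  have hGdvd : ∀ m w', Φ^((L+1-j)/2) ∣ G m w' := by
    intro m w'
    refine Finset.dvd_sum fun i hi => ?_
    have hij : i ≤ j := by have := Finset.mem_range.mp hi; omega
    exact Dvd.dvd.mul_left ((pow_dvd_pow Φ (by omega)).trans (hyp i w')) _
  have hmid : ∀ m ∈ ((range (N+1)).erase 0).erase N, Φ^E ∣ g m := by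
    intro m hm
    have h1 := Finset.mem_erase.mp hm
    have h2 := Finset.mem_erase.mp h1.2
    have hmr := Finset.mem_range.mp h2.2
    have hmN : m < N := by omega
    have hm0 : 0 < m := by omega
    have key : Φ^(1 + (L+1-j)/2) ∣ qbinom R N m * G m (w+N-m) := by
      rw [pow_add, pow_one]
      exact mul_dvd_mul (hΦq m hm0 hmN) (hGdvd m _)
    have hrw : g m = (C (u^m) * X^(w*m)) * (qbinom R N m * G m (w+N-m)) := by
      rw [hgdef]; ring
    rw [hrw]
    exact ((pow_dvd_pow Φ (show E ≤ 1 + (L+1-j)/2 by omega)).trans key).mul_left _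
  have hg0 : g 0 = Tj u N j n (w+N) := by
    simp only [hgdef, hG]
    simp only [pow_zero, map_one, Nat.mul_zero, Nat.zero_mul, one_mul, qbinom_zero_right,
      Nat.sub_zero, mul_one]
    rw [Finset.sum_eq_single_of_mem j (self_mem_range_succ j)]
    · simp [Nat.sub_self]
    · intro i hi hne
      have : j - i ≠ 0 := by have := Finset.mem_range.mp hi; omega
      rw [sig_zero, zero_pow this]
      ring
  have hgN : g N = -(X^(w*N) * G N w) := by
    simp only [hgdef]
    have hGw : G N (w+N-N) = G N w := by rw [Nat.add_sub_cancel]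
    rw [hGw, hu, qbinom_self]
    simp
  have hb : Φ^E ∣ X^(w*N) * G N w - Tj u N j n w := by
    have htop : ∑ i ∈ range (j+1), (j.choose i : Polynomial R) * ((N:Polynomial R))^(j-i) * Tj u N i n w
        = (∑ i ∈ range j, (j.choose i : Polynomial R) * ((N:Polynomial R))^(j-i) * Tj u N i n w)
          + Tj u N j n w := by
      rw [Finset.sum_range_succ, Nat.choose_self, Nat.sub_self, pow_zero, Nat.cast_one]
      simp
    have expand : ∀ i ∈ range (j+1), X^(w*N) * (((sig R N N)^(j-i) * X^(N*N*i) * (j.choose i : Polynomial R)) * Tj u N i n w)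
        = (j.choose i : Polynomial R) * (X^(w*N) * (sig R N N)^(j-i) * X^(N*N*i) - ((N:Polynomial R))^(j-i)) * Tj u N i n w
          + (j.choose i : Polynomial R) * ((N:Polynomial R))^(j-i) * Tj u N i n w := fun i _ => by ring
    have hid : X^(w*N) * G N w - Tj u N j n w
        = (∑ i ∈ range (j+1), (j.choose i : Polynomial R)
            * (X^(w*N) * (sig R N N)^(j-i) * X^(N*N*i) - ((N:Polynomial R))^(j-i)) * Tj u N i n w)
          + ∑ i ∈ range j, (j.choose i : Polynomial R) * ((N:Polynomial R))^(j-i) * Tj u N i n w := by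
      rw [hG, Finset.mul_sum, Finset.sum_congr rfl expand, Finset.sum_add_distrib, htop]
      ring
    rw [hid]
    apply dvd_add
    · refine Finset.dvd_sum fun i hi => ?_
      have hij : i ≤ j := by have := Finset.mem_range.mp hi; omega
      have hdiff : Φ ∣ X^(w*N) * (sig R N N)^(j-i) * X^(N*N*i) - ((N:Polynomial R))^(j-i) := by
        refine dvd_mul3_sub ?_ ?_ ?_
        · have : (N:ℕ)*w = w*N := by ring
          simpa [this] using dvd_X_pow_mul_sub_one hΦ1 w
        · exact (dvd_sig_sub hΦ1).trans (sub_dvd_pow_sub_pow _ _ (j-i))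
        · have : N*(N*i) = N*N*i := by ring
          simpa [this] using dvd_X_pow_mul_sub_one hΦ1 (N*i)
      have hT : Φ^((L+1-j)/2) ∣ (j.choose i : Polynomial R) * Tj u N i n w :=
        Dvd.dvd.mul_left ((pow_dvd_pow Φ (by omega)).trans (hyp i w)) _
      have hterm : (j.choose i : Polynomial R)
            * (X^(w*N) * (sig R N N)^(j-i) * X^(N*N*i) - ((N:Polynomial R))^(j-i)) * Tj u N i n w
          = (X^(w*N) * (sig R N N)^(j-i) * X^(N*N*i) - ((N:Polynomial R))^(j-i))
            * ((j.choose i : Polynomial R) * Tj u N i n w) := by ring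
      rw [hterm]
      exact (pow_dvd_pow Φ (show E ≤ 1 + (L+1-j)/2 by omega)).trans
        (by rw [pow_add, pow_one]; exact mul_dvd_mul hdiff hT)
    · refine Finset.dvd_sum fun i hi => ?_
      have hij : i < j := Finset.mem_range.mp hi
      exact Dvd.dvd.mul_left ((pow_dvd_pow Φ (by omega)).trans (hyp i w)) _
  -- assemble
  have h01 : g 0 + ∑ m ∈ (range (N+1)).erase 0, g m = ∑ m ∈ range (N+1), g m :=
    Finset.add_sum_erase _ g (Finset.mem_range.mpr (by omega))
  have h02 : g N + ∑ m ∈ ((range (N+1)).erase 0).erase N, g m = ∑ m ∈ (range (N+1)).erase 0, g m :=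
    Finset.add_sum_erase _ g (Finset.mem_erase.mpr ⟨hN.ne', Finset.mem_range.mpr (by omega)⟩)
  have htotal : Tj u N j (n+N) w
      = ((X^N - 1) * Tj u N (j+1) n w - (X^(w*N) * G N w - Tj u N j n w))
        + ∑ m ∈ ((range (N+1)).erase 0).erase N, g m := by
    rw [h0, ← h01, ← h02, hg0, hgN, Tj_shift]
    ring
  rw [htotal]
  refine dvd_add (dvd_sub ?_ hb) (Finset.dvd_sum hmid)
  have : Φ^(1 + (L-j)/2) ∣ (X^N - 1) * Tj u N (j+1) n w := by
    rw [pow_add, pow_one]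
    exact mul_dvd_mul hΦ1 (by have := hyp (j+1) w; simpa using this)
  exact (pow_dvd_pow Φ (show E ≤ 1 + (L-j)/2 by omega)).trans this

lemma step_dvd (u : R) (N : ℕ) (Φ : Polynomial R) (E : ℕ → ℕ)
    (hE : ∀ i j, i ≤ j → E j ≤ E i) (n : ℕ)
    (hyp : ∀ j w, Φ^(E j) ∣ Tj u N j n w) (j w : ℕ) :
    Φ^(E j) ∣ Tj u N j (n+1) w := by
  rw [Tj_step]
  refine dvd_add (hyp j (w+1)) (Dvd.dvd.mul_left (Finset.dvd_sum fun i hi => ?_) _)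
  have hij : i ≤ j := by have := Finset.mem_range.mp hi; omega
  exact Dvd.dvd.mul_left ((pow_dvd_pow Φ (hE i j hij)).trans (hyp i w)) _

theorem main_dvd (u : R) (N : ℕ) (Φ : Polynomial R) (hN : 0 < N) (hu : u^N = -1)
    (hΦ1 : Φ ∣ X^N - 1) (hΦq : ∀ m, 0 < m → m < N → Φ ∣ qbinom R N m) :
    ∀ L n, L*N ≤ n → ∀ j w, Φ^((L+1-j)/2) ∣ Tj u N j n w := by
  intro L
  induction L with
  | zero =>
    intro n _ j w
    have : (0+1-j)/2 = 0 := by omega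
    rw [this, pow_zero]
    exact one_dvd _
  | succ L ihL =>
    intro n hn
    induction n, hn using Nat.le_induction with
    | base =>
      intro j w
      have hrw : (L+1)*N = L*N + N := by ring
      rw [hrw]
      exact gain_dvd u N Φ hN hu hΦ1 hΦq L (L*N) (ihL (L*N) le_rfl) j w
    | succ n hn ihn =>
      intro j w
      exact step_dvd u N Φ (fun i => (L+1+1-i)/2)
        (fun i j h => by show (L+1+1-j)/2 ≤ (L+1+1-i)/2; omega) n ihn j w

theorem higher_order_vanishing_const (c k : ℕ) (hc : 1 ≤ c) (hk : Odd k) (hk0 : 0 < k)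
    (ζ : ℂ) (hζ : IsPrimitiveRoot ζ (2 * c)) (d z : ℕ) (a : Zadj ζ) (n : ℕ)
    (hn : (2 * d + 1) * (k * c) ≤ n) :
    Polynomial.cyclotomic (k * c) (Zadj ζ) ^ (d + 1) ∣
      ∑ m ∈ Finset.range (n + 1), C (zeta ζ ^ m * a) * X ^ (z * m) *
        qbinom (Zadj ζ) n m := by
  set N := k * c with hNdef
  have hN : 0 < N := Nat.mul_pos hk0 hc
  -- ζ^c = -1
  have hzc : ζ ^ c = -1 := by
    have h2 : (ζ ^ c) ^ 2 = 1 := by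
      rw [← pow_mul, mul_comm]
      exact hζ.pow_eq_one
    have hne : ζ ^ c ≠ 1 := hζ.pow_ne_one_of_pos_of_lt (by omega) (by omega)
    have : (ζ ^ c - 1) * (ζ ^ c + 1) = 0 := by linear_combination h2
    rcases mul_eq_zero.mp this with h | h
    · exact absurd (by linear_combination h) hne
    · linear_combination h
  have hzN : ζ ^ N = -1 := by
    rw [hNdef, mul_comm k c, pow_mul, hzc, hk.neg_one_pow]
  have hu : (zeta ζ) ^ N = -1 := by
    apply Subtype.ext
    push_cast
    exact hzN
  have hΦ1 : cyclotomic N (Zadj ζ) ∣ X ^ N - 1 := cyclotomic.dvd_X_pow_sub_one N _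
  have hΦq : ∀ m, 0 < m → m < N → cyclotomic N (Zadj ζ) ∣ qbinom (Zadj ζ) N m :=
    fun m hm hmN => cyclotomic_dvd_qbinom hm hmN
  have hmain := main_dvd (zeta ζ) N (cyclotomic N (Zadj ζ)) hN hu hΦ1 hΦq
    (2*d+1) n hn 0 z
  have hexp : (2*d+1+1-0)/2 = d+1 := by omega
  rw [hexp] at hmain
  have hgoal : ∑ m ∈ Finset.range (n + 1), C (zeta ζ ^ m * a) * X ^ (z * m) *
        qbinom (Zadj ζ) n m = C a * Tj (zeta ζ) N 0 n z := by
    unfold Tj Ssum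
    rw [Finset.mul_sum]
    refine Finset.sum_congr rfl fun m _ => ?_
    beta_reduce
    rw [pow_zero, map_mul]
    ring
  rw [hgoal]
  exact hmain.mul_left _
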